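/- For every n ≥ 1, the counts satisfy, as real numbers, c_{n+1} = δ_n·L_n + (2 − 2·δ_n)·c_n, where δ_n = o_n/m_n; i.e., the vector (L_n, c_n) evolves by the time-varying linear system with matrix M_n = [[3, −2], [δ_n, 2 − 2δ_n]]. -/

import Mathlib

/-- Generation operator: expand a run-length vector `R` starting with symbol `s`,
alternating between `s` and `4 - s` from run to run. -/
def G : List ℕ → ℕ → List ℕ
  | [], _ => []
  | r :: rs, s => List.replicate r s ++ G rs (4 - s)

/-- Pillar sequences: `P 1 = [3]`, `P (n+1) = G (P n) 3` for `n ≥ 1`. -/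
def P : ℕ → List ℕ
  | 0 => []
  | 1 => [3]
  | n + 2 => G (P (n + 1)) 3

/-- Block sequences: `B 1 = G [1,3,3,3,1] 1`, `B (n+1) = B n ++ P n ++ B n` for `n ≥ 1`. -/
def B : ℕ → List ℕ
  | 0 => []
  | 1 => G [1, 3, 3, 3, 1] 1
  | n + 2 => B (n + 1) ++ P (n + 1) ++ B (n + 1)

lemma G_length : ∀ (R : List ℕ) (s : ℕ), (G R s).length = R.sum := by
  intro R
  induction R with
  | nil => intro s; simp [G]
  | cons r rs ih => intro s; simp [G, ih]

lemma G_mem : ∀ (R : List ℕ) (s : ℕ), (s = 1 ∨ s = 3) →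
    ∀ x ∈ G R s, x = 1 ∨ x = 3 := by
  intro R
  induction R with
  | nil => intro s _ x hx; simp [G] at hx
  | cons r rs ih =>
      intro s hs x hx
      simp only [G, List.mem_append] at hx
      rcases hx with hx | hx
      · rcases hs with h | h <;> simp_all [List.eq_of_mem_replicate hx]
      · refine ih (4 - s) ?_ x hx
        rcases hs with h | h <;> simp [h]

lemma P_mem : ∀ n, ∀ x ∈ P n, x = 1 ∨ x = 3
  | 0 => by simp [P]
  | 1 => by simp [P]
  | n + 2 => by
      intro x hx
      exact G_mem (P (n + 1)) 3 (Or.inr rfl) x hx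

lemma sum_eq (l : List ℕ) (h : ∀ x ∈ l, x = 1 ∨ x = 3) :
    l.sum + 2 * l.count 1 = 3 * l.length := by
  induction l with
  | nil => simp
  | cons a t ih =>
      have ha := h a List.mem_cons_self
      have ht := ih (fun x hx => h x (List.mem_cons_of_mem a hx))
      rcases ha with h1 | h3 <;> subst_vars <;>
        simp [List.count_cons] <;> omega

lemma P_len_pos : ∀ n, 1 ≤ n → 1 ≤ (P n).length := by
  intro n hn
  induction n with
  | zero => omega
  | succ k ih =>
      cases k with
      | zero => simp [P]
      | succ m =>
          have hk : 1 ≤ (P (m + 1)).length := ih (by omega)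
          have hs := sum_eq (P (m + 1)) (P_mem (m + 1))
          have hc : (P (m + 1)).count 1 ≤ (P (m + 1)).length :=
            List.count_le_length
          have hlen : (P (m + 1 + 1)).length = (P (m + 1)).sum := by
            show (G (P (m + 1)) 3).length = _
            exact G_length _ _
          omega

lemma key : ∀ n, 1 ≤ n → (B n).length = 2 * (B n).count 1 + (P n).length := by
  intro n hn
  induction n with
  | zero => omega
  | succ k ih =>
      cases k with
      | zero => decide
      | succ m =>
          have hk := ih (by omega)
          have hB : B (m + 1 + 1) = B (m + 1) ++ P (m + 1) ++ B (m + 1) := rfl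
          have hPlen : (P (m + 1 + 1)).length = (P (m + 1)).sum := by
            show (G (P (m + 1)) 3).length = _
            exact G_length _ _
          have hs := sum_eq (P (m + 1)) (P_mem (m + 1))
          simp only [hB, List.length_append, List.count_append]
          omega

lemma count_succ (n : ℕ) (hn : 1 ≤ n) :
    (B (n + 1)).count 1 = 2 * (B n).count 1 + (P n).count 1 := by
  obtain ⟨m, rfl⟩ := Nat.exists_eq_add_of_le hn
  have hB : B (1 + m + 1) = B (1 + m) ++ P (1 + m) ++ B (1 + m) := by
    have : 1 + m + 1 = m + 2 := by omega
    rw [this]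
    have : 1 + m = m + 1 := by omega
    rw [this]
    rfl
  rw [hB]
  simp [List.count_append]
  omega

/-- For every `n ≥ 1`, as real numbers, `c (n+1) = δ n · L n + (2 − 2 δ n) · c n`,
where `δ n = o n / m n`; i.e. `(L n, c n)` evolves under the time-varying matrix
`M n = [[3, −2], [δ n, 2 − 2 δ n]]`. -/
theorem count_linear_system :
    ∀ n : ℕ, 1 ≤ n →
      ((B (n + 1)).count 1 : ℝ) =
        (((P n).count 1 : ℝ) / ((P n).length : ℝ)) * ((B n).length : ℝ) +
          (2 - 2 * (((P n).count 1 : ℝ) / ((P n).length : ℝ))) * ((B n).count 1 : ℝ) := by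
  intro n hn
  have hm : ((P n).length : ℝ) ≠ 0 := by
    have := P_len_pos n hn
    positivity
  have h1 : ((B (n + 1)).count 1 : ℝ) = 2 * ((B n).count 1 : ℝ) + ((P n).count 1 : ℝ) := by
    exact_mod_cast congrArg (Nat.cast : ℕ → ℝ) (count_succ n hn)
  have h2 : ((B n).length : ℝ) = 2 * ((B n).count 1 : ℝ) + ((P n).length : ℝ) := by
    exact_mod_cast congrArg (Nat.cast : ℕ → ℝ) (key n hn)
  rw [h1, h2]
  field_simp
  ring
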